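/- The limit as R → ∞ of the integral ∫₀^π R·e^{−R²·cos(2θ)}·sin(R²·sin(2θ) − θ) dθ equals −√π. -/

import Mathlib

open Real Filter MeasureTheory intervalIntegral Metric

noncomputable def cInt (R θ : ℝ) : ℂ :=
  Complex.exp (-((R : ℂ) * Complex.exp (θ * Complex.I)) ^ 2) *
    (Complex.I * R * Complex.exp (θ * Complex.I))

noncomputable def Dv (R θ : ℝ) : ℂ :=
  Complex.I * Complex.exp (θ * Complex.I) *
    Complex.exp (-((R : ℂ) * Complex.exp (θ * Complex.I)) ^ 2) *
    (1 - 2 * ((R : ℂ) * Complex.exp (θ * Complex.I)) ^ 2)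

lemma hasDerivAt_R (θ R : ℝ) : HasDerivAt (fun r : ℝ => cInt r θ) (Dv R θ) R := by
  set e : ℂ := Complex.exp (θ * Complex.I) with he
  have hg : HasDerivAt (fun z : ℂ => Complex.exp (-(z * e) ^ 2) * (Complex.I * z * e))
      (Dv R θ) (R : ℂ) := by
    have h1 : HasDerivAt (fun z : ℂ => -(z * e) ^ 2) (-(2 * ((R:ℂ) * e) * e)) (R : ℂ) := by
      have := ((hasDerivAt_id (R:ℂ)).mul_const e).fun_pow 2
      simpa using this.fun_neg
    have h2 := h1.cexp
    have h3 : HasDerivAt (fun z : ℂ => Complex.I * z * e) (Complex.I * e) (R : ℂ) := by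
      simpa using ((hasDerivAt_id (R:ℂ)).const_mul Complex.I).mul_const e
    have := h2.fun_mul h3
    refine this.congr_deriv ?_
    simp only [Dv, ← he]
    ring
  simpa [cInt, ← he] using hg.comp_ofReal

lemma hasDerivAt_theta (R θ : ℝ) :
    HasDerivAt (fun t : ℝ => Complex.exp (-((R : ℂ) * Complex.exp (t * Complex.I)) ^ 2) *
      Complex.exp (t * Complex.I)) (Dv R θ) θ := by
  have hg : HasDerivAt (fun z : ℂ => Complex.exp (-((R : ℂ) * Complex.exp (z * Complex.I)) ^ 2) *
      Complex.exp (z * Complex.I)) (Dv R θ) (θ : ℂ) := by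
    have hE : HasDerivAt (fun z : ℂ => Complex.exp (z * Complex.I))
        (Complex.I * Complex.exp ((θ:ℂ) * Complex.I)) (θ : ℂ) := by
      have := ((hasDerivAt_id (θ:ℂ)).mul_const Complex.I).cexp
      simpa [mul_comm] using this
    have h1 : HasDerivAt (fun z : ℂ => -((R : ℂ) * Complex.exp (z * Complex.I)) ^ 2)
        (-(2 * ((R:ℂ) * Complex.exp ((θ:ℂ) * Complex.I)) *
          ((R:ℂ) * (Complex.I * Complex.exp ((θ:ℂ) * Complex.I))))) (θ : ℂ) := by
      have := ((hE.const_mul (R:ℂ)).fun_pow 2).fun_neg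
      refine this.congr_deriv ?_
      ring
    have := (h1.cexp).fun_mul hE
    refine this.congr_deriv ?_
    simp only [Dv]
    ring
  simpa using hg.comp_ofReal

lemma cInt_cont (R : ℝ) : Continuous (fun θ => cInt R θ) := by
  unfold cInt; fun_prop

lemma Dv_cont (R : ℝ) : Continuous (fun θ => Dv R θ) := by
  unfold Dv; fun_prop

lemma Dv_integral (R : ℝ) :
    (∫ θ in (0:ℝ)..π, Dv R θ) = -2 * Complex.exp (-(R:ℂ)^2) := by
  have := intervalIntegral.integral_eq_sub_of_hasDerivAt
    (f := fun t : ℝ => Complex.exp (-((R : ℂ) * Complex.exp (t * Complex.I)) ^ 2) *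
      Complex.exp (t * Complex.I))
    (fun t _ => hasDerivAt_theta R t)
    ((Dv_cont R).intervalIntegrable 0 π)
  rw [this]
  simp [Complex.exp_pi_mul_I]
  ring

lemma Dv_bound (R : ℝ) : ∀ θ : ℝ, ∀ x ∈ ball R 1,
    ‖Dv x θ‖ ≤ Real.exp ((|R|+1)^2) * (1 + 2*(|R|+1)^2) := by
  intro θ x hx
  have hxb : |x| ≤ |R| + 1 := by
    have := mem_ball_iff_norm.mp hx
    have : |x - R| < 1 := by simpa using this
    calc |x| = |(x - R) + R| := by ring_nf
    _ ≤ |x - R| + |R| := abs_add_le _ _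
    _ ≤ |R| + 1 := by linarith
  have he : ‖Complex.exp (θ * Complex.I)‖ = 1 := by
    simpa using Complex.norm_exp_ofReal_mul_I θ
  have hc : ‖(x : ℂ) * Complex.exp (θ * Complex.I)‖ = |x| := by
    simp [he, Complex.norm_real]
  have h1 : ‖Complex.exp (-((x : ℂ) * Complex.exp (θ * Complex.I)) ^ 2)‖ ≤
      Real.exp ((|R|+1)^2) := by
    rw [Complex.norm_exp]
    apply Real.exp_le_exp.mpr
    calc (-((x : ℂ) * Complex.exp (θ * Complex.I)) ^ 2).re
        ≤ ‖(-((x : ℂ) * Complex.exp (θ * Complex.I)) ^ 2)‖ := Complex.re_le_norm _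
      _ = |x|^2 := by rw [norm_neg, norm_pow, hc]
      _ ≤ (|R|+1)^2 := by nlinarith [abs_nonneg x]
  have h2 : ‖(1 : ℂ) - 2 * ((x : ℂ) * Complex.exp (θ * Complex.I)) ^ 2‖ ≤ 1 + 2*(|R|+1)^2 := by
    calc ‖(1 : ℂ) - 2 * ((x : ℂ) * Complex.exp (θ * Complex.I)) ^ 2‖
        ≤ ‖(1:ℂ)‖ + ‖(2:ℂ) * ((x : ℂ) * Complex.exp (θ * Complex.I)) ^ 2‖ := norm_sub_le _ _
      _ = 1 + 2 * |x|^2 := by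
          rw [norm_mul, norm_pow, hc]; simp
      _ ≤ 1 + 2*(|R|+1)^2 := by nlinarith [abs_nonneg x]
  calc ‖Dv x θ‖ = ‖Complex.exp (-((x : ℂ) * Complex.exp (θ * Complex.I)) ^ 2)‖ *
        ‖(1 : ℂ) - 2 * ((x : ℂ) * Complex.exp (θ * Complex.I)) ^ 2‖ := by
        simp [Dv, norm_mul, he]
    _ ≤ Real.exp ((|R|+1)^2) * (1 + 2*(|R|+1)^2) := by
        apply mul_le_mul h1 h2 (norm_nonneg _) (Real.exp_pos _).le

lemma hasDerivAt_F (R : ℝ) :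
    HasDerivAt (fun r : ℝ => ∫ θ in (0:ℝ)..π, cInt r θ)
      (-2 * Complex.exp (-(R:ℂ)^2)) R := by
  have key := intervalIntegral.hasDerivAt_integral_of_dominated_loc_of_deriv_le
    (F := fun r θ => cInt r θ) (F' := fun r θ => Dv r θ) (x₀ := R)
    (a := 0) (b := π) (μ := MeasureTheory.volume)
    (bound := fun _ => Real.exp ((|R|+1)^2) * (1 + 2*(|R|+1)^2))
    (ball_mem_nhds R one_pos)
    (Filter.Eventually.of_forall fun x => ((cInt_cont x).aestronglyMeasurable))
    ((cInt_cont R).intervalIntegrable 0 π)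
    ((Dv_cont R).aestronglyMeasurable)
    (Filter.Eventually.of_forall fun θ _ => fun x hx => Dv_bound R θ x hx)
    (intervalIntegrable_const)
    (Filter.Eventually.of_forall fun θ _ => fun x _ => hasDerivAt_R θ x)
  rw [← Dv_integral R]
  exact key.2

lemma F_eq (R : ℝ) : (∫ θ in (0:ℝ)..π, cInt R θ) =
    ((-2 * ∫ s in (0:ℝ)..R, Real.exp (-s^2) : ℝ) : ℂ) := by
  have hcont : Continuous fun s : ℝ => -2 * Complex.exp (-(s:ℂ)^2) := by fun_prop
  have hftc := intervalIntegral.integral_eq_sub_of_hasDerivAt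
    (f := fun r : ℝ => ∫ θ in (0:ℝ)..π, cInt r θ)
    (f' := fun r : ℝ => -2 * Complex.exp (-(r:ℂ)^2))
    (fun t _ => hasDerivAt_F t)
    (hcont.intervalIntegrable 0 R)
  have hF0 : (∫ θ in (0:ℝ)..π, cInt 0 θ) = 0 := by simp [cInt]
  simp only [hF0, sub_zero] at hftc
  rw [← hftc, intervalIntegral.integral_const_mul]
  push_cast
  congr 1
  rw [← intervalIntegral.integral_ofReal]
  apply intervalIntegral.integral_congr
  intro s _
  beta_reduce
  rw [Complex.ofReal_exp]
  norm_cast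

lemma re_cInt (R θ : ℝ) : (cInt R θ).re =
    R * Real.exp (-(R ^ 2 * Real.cos (2 * θ))) * Real.sin (R ^ 2 * Real.sin (2 * θ) - θ) := by
  have harg : -((R : ℂ) * Complex.exp (θ * Complex.I)) ^ 2 =
      ((-(R^2 * Real.cos (2*θ)) : ℝ) : ℂ) + ((-(R^2 * Real.sin (2*θ)) : ℝ) : ℂ) * Complex.I := by
    have h2 : Complex.exp (θ * Complex.I) ^ 2 = Complex.exp (((2*θ : ℝ) : ℂ) * Complex.I) := by
      rw [← Complex.exp_nat_mul]
      push_cast; ring_nf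
    have h3 : Complex.exp (((2*θ : ℝ) : ℂ) * Complex.I) =
        ((Real.cos (2*θ) : ℝ) : ℂ) + ((Real.sin (2*θ) : ℝ) : ℂ) * Complex.I := by
      rw [Complex.exp_mul_I, Complex.ofReal_cos, Complex.ofReal_sin]
    rw [mul_pow, h2, h3]
    push_cast; ring
  have hu : Complex.exp ((θ:ℂ) * Complex.I) =
      ((Real.cos θ : ℝ) : ℂ) + ((Real.sin θ : ℝ) : ℂ) * Complex.I := by
    rw [Complex.exp_mul_I, Complex.ofReal_cos, Complex.ofReal_sin]
  rw [cInt, harg, hu, Complex.exp_add]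
  rw [show Complex.exp (((-(R^2 * Real.cos (2*θ)) : ℝ) : ℂ)) =
      ((Real.exp (-(R^2 * Real.cos (2*θ))) : ℝ) : ℂ) from (Complex.ofReal_exp _).symm]
  rw [show Complex.exp (((-(R^2 * Real.sin (2*θ)) : ℝ) : ℂ) * Complex.I) =
      ((Real.cos (-(R^2 * Real.sin (2*θ))) : ℝ) : ℂ) +
        ((Real.sin (-(R^2 * Real.sin (2*θ))) : ℝ) : ℂ) * Complex.I from by
    rw [Complex.exp_mul_I, Complex.ofReal_cos, Complex.ofReal_sin]]
  simp only [Complex.mul_re, Complex.mul_im, Complex.add_re, Complex.add_im,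
    Complex.I_re, Complex.I_im, Complex.ofReal_re, Complex.ofReal_im,
    Real.sin_neg, Real.cos_neg]
  rw [Real.sin_sub]
  ring

theorem strange_integral_gaussian_semicircle_real_part :
    Tendsto (fun R : ℝ =>
      ∫ θ in (0:ℝ)..π,
        R * Real.exp (-(R ^ 2 * Real.cos (2 * θ))) *
          Real.sin (R ^ 2 * Real.sin (2 * θ) - θ))
      atTop (nhds (-Real.sqrt π)) := by
  have hkey : ∀ R : ℝ, (∫ θ in (0:ℝ)..π,
      R * Real.exp (-(R ^ 2 * Real.cos (2 * θ))) *
        Real.sin (R ^ 2 * Real.sin (2 * θ) - θ)) =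
      -2 * ∫ s in (0:ℝ)..R, Real.exp (-s^2) := by
    intro R
    rw [intervalIntegral.integral_congr (g := fun θ => (cInt R θ).re)
      (fun θ _ => (re_cInt R θ).symm)]
    have h := Complex.reCLM.intervalIntegral_comp_comm
      ((cInt_cont R).intervalIntegrable (μ := MeasureTheory.volume) 0 π)
    simp only [Complex.reCLM_apply] at h
    rw [h, F_eq R, Complex.ofReal_re]
  have hInt : MeasureTheory.IntegrableOn (fun s : ℝ => Real.exp (-s^2)) (Set.Ioi 0) := by
    have := integrable_exp_neg_mul_sq (one_pos)
    simpa using this.integrableOn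
  have hlim := MeasureTheory.intervalIntegral_tendsto_integral_Ioi 0 hInt tendsto_id
  have hval : (∫ s in Set.Ioi (0:ℝ), Real.exp (-s^2)) = Real.sqrt π / 2 := by
    have := integral_gaussian_Ioi 1
    simpa using this
  rw [hval] at hlim
  have hfin : Tendsto (fun R : ℝ => -2 * ∫ s in (0:ℝ)..R, Real.exp (-s^2))
      atTop (nhds (-Real.sqrt π)) := by
    have := hlim.const_mul (-2 : ℝ)
    convert this using 2
    · rfl
    · ring
  exact hfin.congr (fun R => (hkey R).symm)
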